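/- Let M be a right-angled Coxeter matrix on a type B, with Coxeter group W(M) and simple reflections t_b for b ∈ B. Suppose i, j, k, l ∈ B form an induced 4-cycle in M. Then there exists a group homomorphism from W (the right-angled Coxeter group of the 4-cycle) to W(M) sending s₁ ↦ t_i, s₂ ↦ t_j, s₃ ↦ t_k, s₄ ↦ t_l, and this homomorphism is injective. -/

import Mathlib

/-- The Coxeter matrix of the 4-cycle: off-diagonal entries are `2` for cyclically adjacent
indices and `0` (i.e. `∞`) for the two opposite pairs. -/
def C4 : CoxeterMatrix (Fin 4) where
  M := Matrix.of fun i j : Fin 4 ↦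
    if i = j then 1
    else if (i.val + 1) % 4 = j.val ∨ (j.val + 1) % 4 = i.val then 2 else 0
  off_diagonal := by
    intro i i' h
    fin_cases i <;> fin_cases i' <;> simp_all

/-- `W`, the right-angled Coxeter group of the 4-cycle. -/
abbrev W : Type := C4.Group

/-- The simple reflections `s₁, s₂, s₃, s₄` of `W`, indexed by `Fin 4`
(so `s 0 = s₁`, `s 1 = s₂`, `s 2 = s₃`, `s 3 = s₄`). -/
def s (i : Fin 4) : W := C4.simple i

/-- A Coxeter matrix is *right-angled* if every off-diagonal entry is `0` (meaning `∞`, no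
relation imposed) or `2`. -/
def CoxeterMatrix.IsRightAngled {B : Type*} (M : CoxeterMatrix B) : Prop :=
  ∀ i j : B, i ≠ j → M i j = 0 ∨ M i j = 2

/-- Four indices `i, j, k, l` form an *induced 4-cycle* in the Coxeter matrix `M` if they are
pairwise distinct, cyclically consecutive ones commute (`M i j = M j k = M k l = M l i = 2`)
and the two opposite pairs satisfy no relation (`M i k = 0` and `M j l = 0`). -/
def CoxeterMatrix.InducedFourCycle {B : Type*} (M : CoxeterMatrix B) (i j k l : B) : Prop :=
  (i ≠ j ∧ i ≠ k ∧ i ≠ l ∧ j ≠ k ∧ j ≠ l ∧ k ≠ l) ∧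
  M i j = 2 ∧ M j k = 2 ∧ M k l = 2 ∧ M l i = 2 ∧ M i k = 0 ∧ M j l = 0

theorem keyC : ∀ a b : Fin 4, (s a * s b) ^ C4 a b = 1 :=
  fun a b => C4.toCoxeterSystem.simple_mul_simple_pow a b

theorem sq_s (a : Fin 4) : s a * s a = 1 := by
  have := keyC a a
  rwa [C4.diagonal, pow_one] at this

/-- If `i, j, k, l` form an induced 4-cycle in a right-angled Coxeter matrix `M`, then there is
a group homomorphism from the right-angled Coxeter group `W` of the 4-cycle to the Coxeter
group of `M` sending `s₁ ↦ t_i`, `s₂ ↦ t_j`, `s₃ ↦ t_k`, `s₄ ↦ t_l`, and it is injective. -/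
theorem stmt9 {B : Type*} (M : CoxeterMatrix B) (hra : M.IsRightAngled) (i j k l : B)
    (hcyc : M.InducedFourCycle i j k l) :
    ∃ f : W →* M.Group,
      f (s 0) = M.simple i ∧ f (s 1) = M.simple j ∧
      f (s 2) = M.simple k ∧ f (s 3) = M.simple l ∧
      Function.Injective f := by
  classical
  obtain ⟨⟨hij, hik, hil, hjk, hjl, hkl⟩, e1, e2, e3, e4, e5, e6⟩ := hcyc
  have key : ∀ x y : B, (M.simple x * M.simple y) ^ M x y = 1 :=
    fun x y => M.toCoxeterSystem.simple_mul_simple_pow x y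
  have sqM : ∀ x : B, M.simple x * M.simple x = 1 := by
    intro x
    have := key x x
    rwa [M.diagonal, pow_one] at this
  -- the forward homomorphism
  set g : Fin 4 → M.Group := ![M.simple i, M.simple j, M.simple k, M.simple l] with hgdef
  have hg : C4.IsLiftable g := by
    have eil : M i l = 2 := (M.symmetric i l).trans e4
    have eji : M j i = 2 := (M.symmetric j i).trans e1
    have ekj : M k j = 2 := (M.symmetric k j).trans e2
    have elk : M l k = 2 := (M.symmetric l k).trans e3
    intro a b
    fin_cases a <;> fin_cases b
    · show (M.simple i * M.simple i) ^ C4 0 0 = 1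
      rw [show C4 0 0 = 1 by decide, pow_one]; exact sqM i
    · show (M.simple i * M.simple j) ^ C4 0 1 = 1
      rw [show C4 0 1 = 2 by decide, ← e1]; exact key i j
    · show (M.simple i * M.simple k) ^ C4 0 2 = 1
      rw [show C4 0 2 = 0 by decide, pow_zero]
    · show (M.simple i * M.simple l) ^ C4 0 3 = 1
      rw [show C4 0 3 = 2 by decide, ← eil]; exact key i l
    · show (M.simple j * M.simple i) ^ C4 1 0 = 1
      rw [show C4 1 0 = 2 by decide, ← eji]; exact key j i
    · show (M.simple j * M.simple j) ^ C4 1 1 = 1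
      rw [show C4 1 1 = 1 by decide, pow_one]; exact sqM j
    · show (M.simple j * M.simple k) ^ C4 1 2 = 1
      rw [show C4 1 2 = 2 by decide, ← e2]; exact key j k
    · show (M.simple j * M.simple l) ^ C4 1 3 = 1
      rw [show C4 1 3 = 0 by decide, pow_zero]
    · show (M.simple k * M.simple i) ^ C4 2 0 = 1
      rw [show C4 2 0 = 0 by decide, pow_zero]
    · show (M.simple k * M.simple j) ^ C4 2 1 = 1
      rw [show C4 2 1 = 2 by decide, ← ekj]; exact key k j
    · show (M.simple k * M.simple k) ^ C4 2 2 = 1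
      rw [show C4 2 2 = 1 by decide, pow_one]; exact sqM k
    · show (M.simple k * M.simple l) ^ C4 2 3 = 1
      rw [show C4 2 3 = 2 by decide, ← e3]; exact key k l
    · show (M.simple l * M.simple i) ^ C4 3 0 = 1
      rw [show C4 3 0 = 2 by decide, ← e4]; exact key l i
    · show (M.simple l * M.simple j) ^ C4 3 1 = 1
      rw [show C4 3 1 = 0 by decide, pow_zero]
    · show (M.simple l * M.simple k) ^ C4 3 2 = 1
      rw [show C4 3 2 = 2 by decide, ← elk]; exact key l k
    · show (M.simple l * M.simple l) ^ C4 3 3 = 1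
      rw [show C4 3 3 = 1 by decide, pow_one]; exact sqM l
  set f : W →* M.Group := C4.toCoxeterSystem.lift ⟨g, hg⟩ with hfdef
  have hf : ∀ a : Fin 4, f (s a) = g a := fun a =>
    C4.toCoxeterSystem.lift_apply_simple hg a
  -- the retraction
  set h : B → W := fun b =>
    if b = i then s 0 else if b = j then s 1 else if b = k then s 2 else
      if b = l then s 3 else 1 with hhdef
  have hvi : h i = s 0 := by simp [hhdef]
  have hvj : h j = s 1 := by simp [hhdef, Ne.symm hij]
  have hvk : h k = s 2 := by simp [hhdef, Ne.symm hik, Ne.symm hjk]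
  have hvl : h l = s 3 := by simp [hhdef, Ne.symm hil, Ne.symm hjl, Ne.symm hkl]
  have hvo : ∀ b : B, b ≠ i → b ≠ j → b ≠ k → b ≠ l → h b = 1 := by
    intro b h1 h2 h3 h4; simp [hhdef, h1, h2, h3, h4]
  have hcomm2 : ∀ a b : Fin 4, C4 a b = 2 → (s a * s b) ^ 2 = 1 := by
    intro a b hab
    have := keyC a b
    rwa [hab] at this
  have sqs' : ∀ a : Fin 4, s a ^ 2 = 1 := fun a => by rw [sq]; exact sq_s a
  have hsq : ∀ b : B, h b * h b = 1 := by
    intro b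
    by_cases h1 : b = i; · rw [h1, hvi]; exact sq_s 0
    by_cases h2 : b = j; · rw [h2, hvj]; exact sq_s 1
    by_cases h3 : b = k; · rw [h3, hvk]; exact sq_s 2
    by_cases h4 : b = l; · rw [h4, hvl]; exact sq_s 3
    rw [hvo b h1 h2 h3 h4, one_mul]
  have hsq' : ∀ b : B, (h b) ^ 2 = 1 := fun b => by rw [sq]; exact hsq b
  have hh : M.IsLiftable h := by
    intro a b
    rcases eq_or_ne a b with rfl | hab
    · rw [M.diagonal, pow_one]; exact hsq a
    rcases hra a b hab with h0 | h2
    · rw [h0, pow_zero]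
    rw [h2]
    -- need (h a * h b)^2 = 1
    by_cases ha1 : a = i
    · by_cases hb1 : b = j
      · rw [ha1, hb1, hvi, hvj]; exact hcomm2 0 1 (by decide)
      by_cases hb2 : b = l
      · rw [ha1, hb2, hvi, hvl]; exact hcomm2 0 3 (by decide)
      by_cases hb3 : b = k
      · rw [ha1, hb3, e5] at h2; exact absurd h2 (by norm_num)
      have hbi : b ≠ i := fun hx => hab (by rw [ha1, hx])
      rw [hvo b hbi hb1 hb3 hb2, mul_one, ha1, hvi]; exact sqs' 0
    by_cases ha2 : a = j
    · by_cases hb1 : b = i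
      · rw [ha2, hb1, hvj, hvi]; exact hcomm2 1 0 (by decide)
      by_cases hb2 : b = k
      · rw [ha2, hb2, hvj, hvk]; exact hcomm2 1 2 (by decide)
      by_cases hb3 : b = l
      · rw [ha2, hb3, e6] at h2; exact absurd h2 (by norm_num)
      have hbj : b ≠ j := fun hx => hab (by rw [ha2, hx])
      rw [hvo b hb1 hbj hb2 hb3, mul_one, ha2, hvj]; exact sqs' 1
    by_cases ha3 : a = k
    · by_cases hb1 : b = j
      · rw [ha3, hb1, hvk, hvj]; exact hcomm2 2 1 (by decide)
      by_cases hb2 : b = l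
      · rw [ha3, hb2, hvk, hvl]; exact hcomm2 2 3 (by decide)
      by_cases hb3 : b = i
      · rw [ha3, hb3, M.symmetric, e5] at h2; exact absurd h2 (by norm_num)
      have hbk : b ≠ k := fun hx => hab (by rw [ha3, hx])
      rw [hvo b hb3 hb1 hbk hb2, mul_one, ha3, hvk]; exact sqs' 2
    by_cases ha4 : a = l
    · by_cases hb1 : b = i
      · rw [ha4, hb1, hvl, hvi]; exact hcomm2 3 0 (by decide)
      by_cases hb2 : b = k
      · rw [ha4, hb2, hvl, hvk]; exact hcomm2 3 2 (by decide)
      by_cases hb3 : b = j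
      · rw [ha4, hb3, M.symmetric, e6] at h2; exact absurd h2 (by norm_num)
      have hbl : b ≠ l := fun hx => hab (by rw [ha4, hx])
      rw [hvo b hb1 hb3 hb2 hbl, mul_one, ha4, hvl]; exact sqs' 3
    rw [hvo a ha1 ha2 ha3 ha4, one_mul]; exact hsq' b
  set r : M.Group →* W := M.toCoxeterSystem.lift ⟨h, hh⟩ with hrdef
  have hr : ∀ b : B, r (M.simple b) = h b := fun b =>
    M.toCoxeterSystem.lift_apply_simple hh b
  have hcomp : r.comp f = MonoidHom.id W := by
    apply C4.toCoxeterSystem.ext_simple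
    intro a
    show r (f (s a)) = s a
    rw [hf]
    fin_cases a
    · show r (M.simple i) = s 0; rw [hr, hvi]
    · show r (M.simple j) = s 1; rw [hr, hvj]
    · show r (M.simple k) = s 2; rw [hr, hvk]
    · show r (M.simple l) = s 3; rw [hr, hvl]
  refine ⟨f, hf 0, hf 1, hf 2, hf 3, ?_⟩
  intro x y hxy
  have hx : r (f x) = x := DFunLike.congr_fun hcomp x
  have hy : r (f y) = y := DFunLike.congr_fun hcomp y
  rw [← hx, ← hy, hxy]
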